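/- For the Carreau law with r ∈ (1,2], ν > 0, ε > 0, there exist constants c > 0 and m ≥ 0 such that S(D):D ≥ −m + c(|D|^r + |S(D)|^{r'}) for all symmetric D, where 1/r + 1/r' = 1. -/

import Mathlib

/-- The Frobenius pairing `A : B = Σ_{ij} A_{ij} B_{ij}`. -/
def frob2 {d : ℕ} (A B : Fin d → Fin d → ℝ) : ℝ := ∑ i, ∑ j, A i j * B i j

/-- The Frobenius norm `|A| = (A:A)^{1/2}`. -/
noncomputable def fnorm {d : ℕ} (A : Fin d → Fin d → ℝ) : ℝ := Real.sqrt (frob2 A A)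

/-- The Carreau stress `S(D) = 2ν (ε² + |D|²)^{(r−2)/2} D`. -/
noncomputable def carreau {d : ℕ} (ν ε r : ℝ) (D : Fin d → Fin d → ℝ) :
    Fin d → Fin d → ℝ :=
  (2 * ν * (ε ^ 2 + fnorm D ^ 2) ^ ((r - 2) / 2)) • D

lemma frob2_self_nonneg {d : ℕ} (A : Fin d → Fin d → ℝ) : 0 ≤ frob2 A A :=
  Finset.sum_nonneg fun i _ => Finset.sum_nonneg fun j _ => mul_self_nonneg _

lemma frob2_smul {d : ℕ} (a : ℝ) (A B : Fin d → Fin d → ℝ) :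
    frob2 (a • A) B = a * frob2 A B := by
  simp [frob2, Finset.mul_sum, mul_assoc]

lemma fnorm_nonneg {d : ℕ} (A : Fin d → Fin d → ℝ) : 0 ≤ fnorm A := Real.sqrt_nonneg _

lemma fnorm_sq {d : ℕ} (A : Fin d → Fin d → ℝ) : fnorm A ^ 2 = frob2 A A :=
  Real.sq_sqrt (frob2_self_nonneg A)

lemma fnorm_smul {d : ℕ} {a : ℝ} (ha : 0 ≤ a) (A : Fin d → Fin d → ℝ) :
    fnorm (a • A) = a * fnorm A := by
  have h : frob2 (a • A) (a • A) = a ^ 2 * frob2 A A := by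
    simp only [frob2, Finset.mul_sum, Pi.smul_apply, smul_eq_mul]
    congr 1; ext i; congr 1; ext j; ring
  rw [fnorm, h, Real.sqrt_mul (sq_nonneg a), Real.sqrt_sq ha, fnorm]

/-- Coercivity (`r`-graph property) of the Carreau law with `r ∈ (1,2]`: there are
`c > 0` and `m ≥ 0` with `S(D):D ≥ −m + c(|D|^r + |S(D)|^{r'})` for all symmetric `D`,
where `1/r + 1/r' = 1`. -/
theorem stmt_11 {d : ℕ} (ν ε r r' : ℝ) (hν : 0 < ν) (hε : 0 < ε)
    (hr1 : 1 < r) (hr2 : r ≤ 2) (hconj : 1 / r + 1 / r' = 1) :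
    ∃ c : ℝ, 0 < c ∧ ∃ m : ℝ, 0 ≤ m ∧
      ∀ D : Fin d → Fin d → ℝ, (∀ i j, D i j = D j i) →
        -m + c * (fnorm D ^ r + fnorm (carreau ν ε r D) ^ r') ≤
          frob2 (carreau ν ε r D) D := by
  have hr0 : (0:ℝ) < r := lt_trans one_pos hr1
  have h1r' : 1 / r' = (r - 1) / r := by field_simp at hconj ⊢; linarith
  have hr'pos : 0 < r' := by
    have h2 : 0 < 1 / r' := by rw [h1r']; exact div_pos (by linarith) hr0
    exact (one_div_pos).mp h2
  have hrr' : r' * (r - 1) = r := by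
    field_simp at h1r'
    linarith
  have hKpos : (0:ℝ) < 1 + (2 * ν) ^ r' := by
    have := Real.rpow_pos_of_pos (by linarith : (0:ℝ) < 2 * ν) r'
    linarith
  refine ⟨2 * ν / (1 + (2 * ν) ^ r'), div_pos (by linarith) hKpos,
    2 * ν * ε ^ r, mul_nonneg (by linarith) (Real.rpow_nonneg hε.le r), ?_⟩
  intro D _
  set K : ℝ := 1 + (2 * ν) ^ r' with hK
  set t := fnorm D with ht
  have htnn : 0 ≤ t := fnorm_nonneg D
  set E : ℝ := ε ^ 2 + t ^ 2 with hE
  have hEpos : 0 < E := by rw [hE]; positivity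
  set g : ℝ := 2 * ν * E ^ ((r - 2) / 2) with hg
  have hgpos : 0 < g := by
    rw [hg]
    have := Real.rpow_pos_of_pos hEpos ((r - 2) / 2)
    positivity
  have hcar : carreau ν ε r D = g • D := rfl
  have hDD : frob2 D D = t ^ 2 := by rw [ht]; exact (fnorm_sq D).symm
  have hSD : frob2 (carreau ν ε r D) D = g * t ^ 2 := by
    rw [hcar, frob2_smul, hDD]
  have hSn : fnorm (carreau ν ε r D) = g * t := by
    rw [hcar, fnorm_smul hgpos.le, ht]
  rw [hSD, hSn]
  have ht2E : t ^ 2 ≤ E := by rw [hE]; nlinarith [sq_nonneg ε]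
  -- bound t ^ r ≤ E ^ (r/2)
  have htr : t ^ r ≤ E ^ (r / 2) := by
    have h1 : t ^ r = (t ^ 2) ^ (r / 2) := by
      rw [← Real.rpow_natCast t 2, ← Real.rpow_mul htnn]
      congr 1; push_cast; ring
    rw [h1]
    exact Real.rpow_le_rpow (by positivity) ht2E (by positivity)
  -- bound t ≤ E^(1/2)
  have htE : t ≤ E ^ ((1:ℝ) / 2) := by
    rw [← Real.sqrt_eq_rpow]
    have hfd : frob2 D D ≤ E := by rw [hDD]; exact ht2E
    calc t = Real.sqrt (frob2 D D) := by rw [ht, fnorm]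
      _ ≤ Real.sqrt E := Real.sqrt_le_sqrt hfd
  have hgt : g * t ≤ 2 * ν * E ^ ((r - 1) / 2) := by
    have hmul : E ^ ((r - 2) / 2) * E ^ ((1:ℝ) / 2) = E ^ ((r - 1) / 2) := by
      rw [← Real.rpow_add hEpos]; ring_nf
    calc g * t ≤ g * E ^ ((1:ℝ) / 2) := mul_le_mul_of_nonneg_left htE hgpos.le
      _ = 2 * ν * E ^ ((r - 1) / 2) := by rw [hg, mul_assoc, hmul]
  have hSr' : (g * t) ^ r' ≤ (2 * ν) ^ r' * E ^ (r / 2) := by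
    have h1 : (g * t) ^ r' ≤ (2 * ν * E ^ ((r - 1) / 2)) ^ r' :=
      Real.rpow_le_rpow (by positivity) hgt hr'pos.le
    have h2 : (2 * ν * E ^ ((r - 1) / 2)) ^ r' = (2 * ν) ^ r' * E ^ (r / 2) := by
      rw [Real.mul_rpow (by linarith) (Real.rpow_nonneg hEpos.le _),
        ← Real.rpow_mul hEpos.le]
      congr 2
      field_simp
      linarith [hrr']
    rw [h2] at h1; exact h1
  -- combine: c * (t^r + (g t)^r') ≤ 2ν E^(r/2)
  have hcomb : 2 * ν / K * (t ^ r + (g * t) ^ r') ≤ 2 * ν * E ^ (r / 2) := by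
    have hsum : t ^ r + (g * t) ^ r' ≤ K * E ^ (r / 2) := by
      rw [hK]; nlinarith [htr, hSr']
    calc 2 * ν / K * (t ^ r + (g * t) ^ r')
        ≤ 2 * ν / K * (K * E ^ (r / 2)) :=
          mul_le_mul_of_nonneg_left hsum (by positivity)
      _ = 2 * ν * E ^ (r / 2) := by field_simp
  -- final: 2ν E^(r/2) ≤ g t² + 2ν ε^r
  have hfinal : 2 * ν * E ^ (r / 2) ≤ g * t ^ 2 + 2 * ν * ε ^ r := by
    have hsplit : E ^ (r / 2) = E ^ ((r - 2) / 2) * E := by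
      have h3 : E ^ ((r - 2) / 2) * E ^ ((1:ℝ)) = E ^ (r / 2) := by
        rw [← Real.rpow_add hEpos]; congr 1; ring
      rw [Real.rpow_one] at h3; exact h3.symm
    have heps : E ^ ((r - 2) / 2) * ε ^ 2 ≤ ε ^ r := by
      have h1 : E ^ ((r - 2) / 2) ≤ (ε ^ 2) ^ ((r - 2) / 2) :=
        Real.rpow_le_rpow_of_nonpos (by positivity) (by rw [hE]; nlinarith [sq_nonneg t])
          (by linarith)
      have h2 : (ε ^ 2) ^ ((r - 2) / 2) * ε ^ 2 = ε ^ r := by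
        rw [← Real.rpow_natCast ε 2, ← Real.rpow_mul hε.le, ← Real.rpow_add hε]
        congr 1; push_cast; ring
      calc E ^ ((r - 2) / 2) * ε ^ 2 ≤ (ε ^ 2) ^ ((r - 2) / 2) * ε ^ 2 :=
            mul_le_mul_of_nonneg_right h1 (by positivity)
        _ = ε ^ r := h2
    have h2ν : (0:ℝ) ≤ 2 * ν := by linarith
    have heps' := mul_le_mul_of_nonneg_left heps h2ν
    have hgE : g * E = g * ε ^ 2 + g * t ^ 2 := by rw [hE]; ring
    have hge : g * ε ^ 2 ≤ 2 * ν * ε ^ r := by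
      calc g * ε ^ 2 = 2 * ν * (E ^ ((r - 2) / 2) * ε ^ 2) := by rw [hg]; ring
        _ ≤ 2 * ν * ε ^ r := heps'
    have hfs : 2 * ν * E ^ (r / 2) = g * E := by rw [hsplit, hg]; ring
    linarith
  linarith
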